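/- arXiv:1309.7001 — 2 statements merged into one kernel-verified Lean document; each statement's English description precedes it below -/
import Mathlib

section
/- Let a₁, …, a_m be nonzero vectors in ℝ^n and let K denote the composition K = K_m ∘ ⋯ ∘ K₁, where K_j(y) = y - (⟨a_j, y⟩/‖a_j‖²) • a_j. If the vectors a₁, …, a_m span ℝ^n, then for every y ≠ 0 we have ‖K(y)‖ < ‖y‖. -/
open RealInnerProductSpace

private lemma kz_step_sq {n : ℕ} (a z : EuclideanSpace ℝ (Fin n)) (ha : a ≠ 0) :
    ‖z - (⟪a, z⟫ / ‖a‖ ^ 2) • a‖ ^ 2 = ‖z‖ ^ 2 - ⟪a, z⟫ ^ 2 / ‖a‖ ^ 2 := by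
  have hna : ‖a‖ ≠ 0 := norm_ne_zero_iff.mpr ha
  have h := @norm_sub_sq_real (EuclideanSpace ℝ (Fin n)) _ _ z ((⟪a, z⟫ / ‖a‖ ^ 2) • a)
  rw [h, real_inner_smul_right, norm_smul, real_inner_comm]
  rw [mul_pow]
  rw [Real.norm_eq_abs, sq_abs]
  field_simp
  ring

private lemma kz_step_le {n : ℕ} (a z : EuclideanSpace ℝ (Fin n)) (ha : a ≠ 0) :
    ‖z - (⟪a, z⟫ / ‖a‖ ^ 2) • a‖ ≤ ‖z‖ := by
  have h := kz_step_sq a z ha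
  have h2 : ‖z - (⟪a, z⟫ / ‖a‖ ^ 2) • a‖ ^ 2 ≤ ‖z‖ ^ 2 := by
    rw [h]
    have : 0 ≤ ⟪a, z⟫ ^ 2 / ‖a‖ ^ 2 := by positivity
    linarith
  exact (pow_le_pow_iff_left₀ (norm_nonneg _) (norm_nonneg _) two_ne_zero).mp h2

private lemma kz_fold_le {n m : ℕ} (a : Fin m → EuclideanSpace ℝ (Fin n))
    (ha : ∀ j, a j ≠ 0) (l : List (Fin m)) (z : EuclideanSpace ℝ (Fin n)) :
    ‖l.foldl (fun z j => z - (⟪a j, z⟫ / ‖a j‖ ^ 2) • a j) z‖ ≤ ‖z‖ := by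
  induction l generalizing z with
  | nil => simp
  | cons j t ih =>
    simp only [List.foldl_cons]
    exact (ih _).trans (kz_step_le (a j) z (ha j))

private lemma kz_fold_eq {n m : ℕ} (a : Fin m → EuclideanSpace ℝ (Fin n))
    (ha : ∀ j, a j ≠ 0) (l : List (Fin m)) (z : EuclideanSpace ℝ (Fin n))
    (heq : ‖l.foldl (fun z j => z - (⟪a j, z⟫ / ‖a j‖ ^ 2) • a j) z‖ = ‖z‖) :
    ∀ j ∈ l, ⟪a j, z⟫ = 0 := by
  induction l generalizing z with
  | nil => simp
  | cons j t ih =>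
    simp only [List.foldl_cons] at heq
    have h1 := kz_fold_le a ha t (z - (⟪a j, z⟫ / ‖a j‖ ^ 2) • a j)
    have h2 := kz_step_le (a j) z (ha j)
    have hstep : ‖z - (⟪a j, z⟫ / ‖a j‖ ^ 2) • a j‖ = ‖z‖ := le_antisymm h2 (heq ▸ h1)
    have hsq := kz_step_sq (a j) z (ha j)
    rw [hstep] at hsq
    have hz : ⟪a j, z⟫ ^ 2 / ‖a j‖ ^ 2 = 0 := by linarith
    have hna : ‖a j‖ ≠ 0 := norm_ne_zero_iff.mpr (ha j)
    have hinner : ⟪a j, z⟫ = 0 := by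
      have := div_eq_zero_iff.mp hz
      rcases this with h | h
      · exact pow_eq_zero_iff two_ne_zero |>.mp h
      · exact absurd h (pow_ne_zero 2 hna)
    intro i hi
    rcases List.mem_cons.mp hi with rfl | hi'
    · exact hinner
    · have hfix : z - (⟪a j, z⟫ / ‖a j‖ ^ 2) • a j = z := by
        rw [hinner]; simp
      rw [hfix] at heq
      exact ih z heq i hi'

theorem kaczmarz_sweep_strict_contraction {n m : ℕ}
    (a : Fin m → EuclideanSpace ℝ (Fin n)) (ha : ∀ j, a j ≠ 0)
    (hspan : Submodule.span ℝ (Set.range a) = ⊤)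
    (y : EuclideanSpace ℝ (Fin n)) (hy : y ≠ 0) :
    ‖(List.finRange m).foldl
        (fun z j => z - (⟪a j, z⟫ / ‖a j‖ ^ 2) • a j) y‖ < ‖y‖ := by
  rcases lt_or_eq_of_le (kz_fold_le a ha (List.finRange m) y) with h | h
  · exact h
  · exfalso
    have horth : ∀ j, ⟪a j, y⟫ = 0 := fun j =>
      kz_fold_eq a ha (List.finRange m) y h j (List.mem_finRange j)
    have : y ∈ (Submodule.span ℝ (Set.range a))ᗮ := by
      rw [Submodule.mem_orthogonal]
      intro u hu
      refine Submodule.span_induction ?_ ?_ ?_ ?_ hu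
      · rintro x ⟨j, rfl⟩; exact horth j
      · simp
      · intro u v _ _ hu hv; rw [inner_add_left, hu, hv]; ring
      · intro c u _ hu; rw [inner_smul_left, hu]; simp
    rw [hspan, Submodule.top_orthogonal_eq_bot, Submodule.mem_bot] at this
    exact hy this
end

section
/- Let a₁, …, a_m be nonzero vectors spanning ℝ^n and suppose Ax̄ = b, i.e., ⟨a_j, x̄⟩ = b_j for all j. Define one full sweep S(x) by successively applying x ↦ x + ((b_j - ⟨a_j, x⟩)/‖a_j‖²) • a_j for j = 1, …, m. Then for every initial guess x₀, the iterates x_{k+1} = S(x_k) converge to x̄, and moreover x̄ is the unique solution of the system. -/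
open RealInnerProductSpace

noncomputable section KaczmarzAux

variable {n : ℕ}

/-- Orthogonal projection onto the hyperplane orthogonal to `a`. -/
private def kacP (a : EuclideanSpace ℝ (Fin n)) :
    EuclideanSpace ℝ (Fin n) →L[ℝ] EuclideanSpace ℝ (Fin n) :=
  ContinuousLinearMap.id ℝ _ - (innerSL ℝ a).smulRight ((‖a‖ ^ 2)⁻¹ • a)

private lemma kacP_apply (a z : EuclideanSpace ℝ (Fin n)) :
    kacP a z = z - (⟪a, z⟫ / ‖a‖ ^ 2) • a := by
  simp [kacP, smul_smul, div_eq_mul_inv]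

private lemma kacP_inner (a : EuclideanSpace ℝ (Fin n)) (ha : a ≠ 0) (z) :
    ⟪a, kacP a z⟫ = 0 := by
  have hna : ‖a‖ ^ 2 ≠ 0 := pow_ne_zero _ (norm_ne_zero_iff.mpr ha)
  rw [kacP_apply, inner_sub_right, real_inner_smul_right,
    real_inner_self_eq_norm_sq]
  field_simp
  ring

private lemma kacP_norm_sq (a : EuclideanSpace ℝ (Fin n)) (ha : a ≠ 0) (z) :
    ‖z‖ ^ 2 = ‖kacP a z‖ ^ 2 + ‖(⟪a, z⟫ / ‖a‖ ^ 2) • a‖ ^ 2 := by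
  have hz : z = kacP a z + (⟪a, z⟫ / ‖a‖ ^ 2) • a := by
    rw [kacP_apply]; abel
  have horth : ⟪kacP a z, (⟪a, z⟫ / ‖a‖ ^ 2) • a⟫ = 0 := by
    rw [real_inner_smul_right, real_inner_comm a ((kacP a) z), kacP_inner a ha, mul_zero]
  calc ‖z‖ ^ 2 = ‖kacP a z + (⟪a, z⟫ / ‖a‖ ^ 2) • a‖ ^ 2 := by rw [← hz]
    _ = ‖kacP a z‖ ^ 2 + 2 * ⟪kacP a z, (⟪a, z⟫ / ‖a‖ ^ 2) • a⟫
        + ‖(⟪a, z⟫ / ‖a‖ ^ 2) • a‖ ^ 2 := norm_add_sq_real _ _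
    _ = _ := by rw [horth]; ring

private lemma kacP_norm_le (a : EuclideanSpace ℝ (Fin n)) (ha : a ≠ 0) (z) :
    ‖kacP a z‖ ≤ ‖z‖ := by
  have h := kacP_norm_sq a ha z
  nlinarith [norm_nonneg (kacP a z), norm_nonneg z, sq_nonneg ‖(⟪a, z⟫ / ‖a‖ ^ 2) • a‖]

private lemma kacP_norm_lt (a : EuclideanSpace ℝ (Fin n)) (ha : a ≠ 0) (z)
    (hz : ⟪a, z⟫ ≠ 0) : ‖kacP a z‖ < ‖z‖ := by
  have h := kacP_norm_sq a ha z
  have hc : (⟪a, z⟫ / ‖a‖ ^ 2) • a ≠ 0 := by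
    apply smul_ne_zero _ ha
    exact div_ne_zero hz (pow_ne_zero _ (norm_ne_zero_iff.mpr ha))
  have hpos : 0 < ‖(⟪a, z⟫ / ‖a‖ ^ 2) • a‖ := norm_pos_iff.mpr hc
  nlinarith [norm_nonneg (kacP a z), norm_nonneg z]

private lemma kacP_fixed (a z : EuclideanSpace ℝ (Fin n)) (hz : ⟪a, z⟫ = 0) :
    kacP a z = z := by
  simp [kacP_apply, hz]

variable {m : ℕ} (a : Fin m → EuclideanSpace ℝ (Fin n))

private lemma kacT_apply (l : List (Fin m)) :
    ∀ (T₀ : EuclideanSpace ℝ (Fin n) →L[ℝ] EuclideanSpace ℝ (Fin n)) z,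
    (l.foldl (fun T j => (kacP (a j)).comp T) T₀) z
      = l.foldl (fun z j => kacP (a j) z) (T₀ z) := by
  induction l with
  | nil => intro T₀ z; simp
  | cons j l ih =>
    intro T₀ z
    simp only [List.foldl_cons]
    rw [ih]
    simp

private lemma kac_foldl_norm_le (ha : ∀ j, a j ≠ 0) (l : List (Fin m)) :
    ∀ z, ‖l.foldl (fun z j => kacP (a j) z) z‖ ≤ ‖z‖ := by
  induction l with
  | nil => intro z; simp
  | cons j l ih =>
    intro z
    simp only [List.foldl_cons]
    exact le_trans (ih _) (kacP_norm_le _ (ha j) z)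

private lemma kac_foldl_lt (ha : ∀ j, a j ≠ 0) (l : List (Fin m)) :
    ∀ z, (∀ j ∈ l, ⟪a j, z⟫ = 0) ∨ ‖l.foldl (fun z j => kacP (a j) z) z‖ < ‖z‖ := by
  induction l with
  | nil => intro z; exact Or.inl (by simp)
  | cons j l ih =>
    intro z
    simp only [List.foldl_cons]
    by_cases hz : ⟪a j, z⟫ = 0
    · rw [kacP_fixed _ _ hz]
      rcases ih z with h | h
      · exact Or.inl (by
          intro i hi
          rcases List.mem_cons.mp hi with rfl | hi
          · exact hz
          · exact h i hi)
      · exact Or.inr h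
    · refine Or.inr (lt_of_le_of_lt (kac_foldl_norm_le a ha l _) ?_)
      exact kacP_norm_lt _ (ha j) z hz

end KaczmarzAux

theorem kaczmarz_convergence {n m : ℕ}
    (a : Fin m → EuclideanSpace ℝ (Fin n)) (b : Fin m → ℝ)
    (ha : ∀ j, a j ≠ 0) (hspan : Submodule.span ℝ (Set.range a) = ⊤)
    (xbar : EuclideanSpace ℝ (Fin n)) (hxbar : ∀ j, ⟪a j, xbar⟫ = b j) :
    (∀ x₀ : EuclideanSpace ℝ (Fin n),
      Filter.Tendsto
        (fun k => (fun x => (List.finRange m).foldl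
            (fun z j => z + ((b j - ⟪a j, z⟫) / ‖a j‖ ^ 2) • a j) x)^[k] x₀)
        Filter.atTop (nhds xbar)) ∧
    (∀ x : EuclideanSpace ℝ (Fin n), (∀ j, ⟪a j, x⟫ = b j) → x = xbar) := by
  -- if all inner products with a vanish, the vector is zero
  have horthzero : ∀ v : EuclideanSpace ℝ (Fin n), (∀ j, ⟪a j, v⟫ = 0) → v = 0 := by
    intro v hv
    have hmem : v ∈ (Submodule.span ℝ (Set.range a))ᗮ := by
      rw [Submodule.mem_orthogonal]
      intro u hu
      refine Submodule.span_induction ?_ ?_ ?_ ?_ hu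
      · rintro _ ⟨j, rfl⟩; exact hv j
      · simp
      · intro x y _ _ hx hy; rw [inner_add_left, hx, hy, add_zero]
      · intro c x _ hx; rw [inner_smul_left, hx, mul_zero]
    rw [hspan, Submodule.top_orthogonal_eq_bot, Submodule.mem_bot] at hmem
    exact hmem
  have huniq : ∀ x : EuclideanSpace ℝ (Fin n), (∀ j, ⟪a j, x⟫ = b j) → x = xbar := by
    intro x hx
    have : x - xbar = 0 := horthzero _ fun j => by
      rw [inner_sub_right, hx j, hxbar j, sub_self]
    exact sub_eq_zero.mp this
  refine ⟨?_, huniq⟩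
  intro x₀
  -- homogeneous sweep as a continuous linear map
  set T : EuclideanSpace ℝ (Fin n) →L[ℝ] EuclideanSpace ℝ (Fin n) :=
    (List.finRange m).foldl (fun T j => (kacP (a j)).comp T)
      (ContinuousLinearMap.id ℝ _) with hT
  have hTapp : ∀ z, T z = (List.finRange m).foldl (fun z j => kacP (a j) z) z := by
    intro z; rw [hT, kacT_apply]; rfl
  -- translation: one inhomogeneous sweep equals xbar + T (x - xbar)
  have hsweep : ∀ x : EuclideanSpace ℝ (Fin n),
      (List.finRange m).foldl
        (fun z j => z + ((b j - ⟪a j, z⟫) / ‖a j‖ ^ 2) • a j) x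
      = xbar + T (x - xbar) := by
    intro x
    rw [hTapp]
    have : ∀ l : List (Fin m), ∀ z : EuclideanSpace ℝ (Fin n),
        l.foldl (fun z j => z + ((b j - ⟪a j, z⟫) / ‖a j‖ ^ 2) • a j) z
        = xbar + l.foldl (fun z j => kacP (a j) z) (z - xbar) := by
      intro l
      induction l with
      | nil => intro z; simp
      | cons j l ih =>
        intro z
        simp only [List.foldl_cons]
        rw [ih]
        congr 2
        rw [kacP_apply, inner_sub_right, hxbar j]
        have : ⟪a j, z⟫ - b j = -(b j - ⟪a j, z⟫) := by ring
        rw [this, neg_div, neg_smul]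
        abel
    exact this _ x
  -- operator norm of T is < 1
  have hTle : ∀ z, ‖T z‖ ≤ ‖z‖ := by
    intro z; rw [hTapp]; exact kac_foldl_norm_le a ha _ z
  have hTlt : ∀ z, z ≠ 0 → ‖T z‖ < ‖z‖ := by
    intro z hz
    rw [hTapp]
    rcases kac_foldl_lt a ha (List.finRange m) z with h | h
    · exact absurd (horthzero z fun j => h j (List.mem_finRange j)) hz
    · exact h
  have hconv : Filter.Tendsto
      (fun k => (fun x => xbar + T (x - xbar))^[k] x₀) Filter.atTop (nhds xbar) := by
    rcases subsingleton_or_nontrivial (EuclideanSpace ℝ (Fin n)) with hs | hs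
    · have : (fun k => (fun x => xbar + T (x - xbar))^[k] x₀) = fun _ => xbar := by
        funext k; exact Subsingleton.elim _ _
      rw [this]; exact tendsto_const_nhds
    · obtain ⟨z₀, hz₀mem, hmax⟩ := (isCompact_sphere (0 : EuclideanSpace ℝ (Fin n)) 1).exists_isMaxOn
        (NormedSpace.sphere_nonempty.mpr zero_le_one)
        ((continuous_norm.comp T.continuous).continuousOn)
      have hz₀norm : ‖z₀‖ = 1 := mem_sphere_zero_iff_norm.mp hz₀mem
      set c := ‖T z₀‖ with hc
      have hc1 : c < 1 := by
        have := hTlt z₀ (by intro h; rw [h] at hz₀norm; simp at hz₀norm)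
        rwa [hz₀norm] at this
      have hc0 : 0 ≤ c := norm_nonneg _
      have hbound : ∀ v : EuclideanSpace ℝ (Fin n), ‖T v‖ ≤ c * ‖v‖ := by
        intro v
        by_cases hv : v = 0
        · simp [hv]
        · have hnv : (0:ℝ) < ‖v‖ := norm_pos_iff.mpr hv
          have hu : (‖v‖⁻¹ • v) ∈ Metric.sphere (0 : EuclideanSpace ℝ (Fin n)) 1 := by
            rw [mem_sphere_zero_iff_norm, norm_smul, norm_inv, norm_norm]
            field_simp
          have h2 : ‖T (‖v‖⁻¹ • v)‖ ≤ c := hmax hu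
          rw [map_smul, norm_smul, norm_inv, norm_norm] at h2
          calc ‖T v‖ = ‖v‖ * (‖v‖⁻¹ * ‖T v‖) := by field_simp
            _ ≤ ‖v‖ * c := by
                apply mul_le_mul_of_nonneg_left _ (le_of_lt hnv)
                exact h2
            _ = c * ‖v‖ := mul_comm _ _
      -- iterates
      have hiter : ∀ k, (fun x => xbar + T (x - xbar))^[k] x₀ = xbar + (T ^ k) (x₀ - xbar) := by
        intro k
        induction k with
        | zero => simp
        | succ k ih =>
          rw [Function.iterate_succ_apply', ih, pow_succ']
          simp
      have hTk : ∀ k (v : EuclideanSpace ℝ (Fin n)), ‖(T ^ k) v‖ ≤ c ^ k * ‖v‖ := by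
        intro k
        induction k with
        | zero => intro v; simp
        | succ k ih =>
          intro v
          rw [pow_succ']
          calc ‖(T * T ^ k) v‖ = ‖T ((T ^ k) v)‖ := rfl
            _ ≤ c * ‖(T ^ k) v‖ := hbound _
            _ ≤ c * (c ^ k * ‖v‖) := mul_le_mul_of_nonneg_left (ih v) hc0
            _ = c ^ (k + 1) * ‖v‖ := by ring
      rw [tendsto_iff_dist_tendsto_zero]
      apply squeeze_zero (fun k => dist_nonneg) (g := fun k => c ^ k * ‖x₀ - xbar‖)
      · intro k
        rw [hiter k, dist_eq_norm]
        calc ‖xbar + (T ^ k) (x₀ - xbar) - xbar‖ = ‖(T ^ k) (x₀ - xbar)‖ := by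
              congr 1; abel
          _ ≤ c ^ k * ‖x₀ - xbar‖ := hTk k _
      · have := tendsto_pow_atTop_nhds_zero_of_lt_one hc0 hc1
        simpa using this.mul_const ‖x₀ - xbar‖
  have : (fun x : EuclideanSpace ℝ (Fin n) => (List.finRange m).foldl
      (fun z j => z + ((b j - ⟪a j, z⟫) / ‖a j‖ ^ 2) • a j) x)
      = fun x => xbar + T (x - xbar) := funext hsweep
  rw [this]
  exact hconv
end
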